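/- In the symmetric quadratic-equation setup, let Q̄ ∈ ℝ^{d×r} be any matrix of the form V_⊥Q with ‖Q̄‖_max ≤ ω/√d, suppose rω < 1/2, and set V̄ = (V + Q̄)(I_r + Q̄ᵀQ̄)^{−1/2}. Then the distance between the column spaces satisfies d(V̄, V) := ‖V̄V̄ᵀ − VVᵀ‖_2 ≤ 4·r^{3/2}·√μ·ω, and moreover ‖V̄‖_max ≤ 2·√(rμ/d). -/

import Mathlib

open Matrix BigOperators

/-- Entrywise max norm: largest absolute value of an entry. -/
noncomputable def matMaxNorm {m n : Type*} [Fintype m] [Fintype n] (M : Matrix m n ℝ) : ℝ :=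
  ⨆ i, ⨆ j, |M i j|

/-- Matrix ∞-norm: maximum absolute row sum. -/
noncomputable def matInfNorm {m n : Type*} [Fintype m] [Fintype n] (M : Matrix m n ℝ) : ℝ :=
  ⨆ i, ∑ j, |M i j|

/-- Matrix 1-norm: maximum absolute column sum. -/
noncomputable def matOneNorm {m n : Type*} [Fintype m] [Fintype n] (M : Matrix m n ℝ) : ℝ :=
  ⨆ j, ∑ i, |M i j|

/-- Euclidean norm of a vector. -/
noncomputable def vec2Norm {n : Type*} [Fintype n] (x : n → ℝ) : ℝ :=
  Real.sqrt (∑ i, (x i) ^ 2)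

/-- ℓ∞ norm of a vector. -/
noncomputable def vecSupNorm {n : Type*} [Fintype n] (x : n → ℝ) : ℝ :=
  ⨆ i, |x i|

/-- Spectral norm (operator 2-norm) of a matrix. -/
noncomputable def matSpecNorm {m n : Type*} [Fintype m] [Fintype n] (M : Matrix m n ℝ) : ℝ :=
  sSup {c : ℝ | ∃ x : n → ℝ, vec2Norm x ≤ 1 ∧ c = vec2Norm (M.mulVec x)}

/-- Coherence of a d × r matrix with orthonormal columns. -/
noncomputable def matCoherence {d r : ℕ} (V : Matrix (Fin d) (Fin r) ℝ) : ℝ :=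
  ((d : ℝ) / (r : ℝ)) * ⨆ i, ∑ j, (V i j) ^ 2

/-- Inverse of the positive semidefinite square root of a matrix (junk value otherwise). -/
noncomputable def matInvSqrt {n : Type*} [Fintype n] [DecidableEq n] (S : Matrix n n ℝ) :
    Matrix n n ℝ :=
  letI := Classical.propDecidable
  if h : S.PosSemidef then
    ((h.1.eigenvectorUnitary : Matrix n n ℝ) * diagonal ((↑) ∘ (√·) ∘ h.1.eigenvalues) *
      (star h.1.eigenvectorUnitary : Matrix n n ℝ))⁻¹ else 0

/-- Weighted max-norm for matrices with d₁ + d₂ rows. -/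
noncomputable def wMaxNorm {d₁ d₂ : ℕ} {n : Type*} [Fintype n]
    (M : Matrix (Fin d₁ ⊕ Fin d₂) n ℝ) : ℝ :=
  matMaxNorm (Matrix.of fun i j =>
    (Sum.elim (fun _ : Fin d₁ => Real.sqrt d₁) (fun _ : Fin d₂ => Real.sqrt d₂) i) * M i j)

/-- Huber loss with parameter α. -/
noncomputable def huberLoss (α x : ℝ) : ℝ := if |x| ≤ α then x ^ 2 else 2 * α * |x| - α ^ 2


section VecLemmas
variable {n : Type*} [Fintype n]

lemma v2_nonneg (x : n → ℝ) : 0 ≤ vec2Norm x := Real.sqrt_nonneg _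

lemma v2_sq (x : n → ℝ) : vec2Norm x ^ 2 = ∑ i, (x i) ^ 2 :=
  Real.sq_sqrt (Finset.sum_nonneg fun i _ => sq_nonneg _)

lemma dot_self_eq (x : n → ℝ) : x ⬝ᵥ x = vec2Norm x ^ 2 := by
  rw [v2_sq]; simp [dotProduct, sq]

lemma v2_neg (x : n → ℝ) : vec2Norm (-x) = vec2Norm x := by
  simp [vec2Norm]

lemma dot_le (x y : n → ℝ) : x ⬝ᵥ y ≤ vec2Norm x * vec2Norm y := by
  have h := Finset.sum_mul_sq_le_sq_mul_sq Finset.univ x y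
  have h2 : x ⬝ᵥ y ≤ |x ⬝ᵥ y| := le_abs_self _
  refine h2.trans ?_
  rw [← Real.sqrt_sq_eq_abs]
  calc Real.sqrt ((x ⬝ᵥ y) ^ 2) ≤ Real.sqrt ((∑ i, x i ^ 2) * (∑ i, y i ^ 2)) := by
        apply Real.sqrt_le_sqrt; simpa [dotProduct] using h
    _ = vec2Norm x * vec2Norm y := by
        rw [Real.sqrt_mul (Finset.sum_nonneg fun i _ => sq_nonneg _)]; rfl

lemma abs_dot_le (x y : n → ℝ) : |x ⬝ᵥ y| ≤ vec2Norm x * vec2Norm y := by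
  rcases abs_cases (x ⬝ᵥ y) with ⟨h, _⟩ | ⟨h, _⟩
  · rw [h]; exact dot_le x y
  · rw [h]
    have := dot_le (-x) y
    simpa [v2_neg] using this

lemma v2_triangle (x y : n → ℝ) : vec2Norm (x + y) ≤ vec2Norm x + vec2Norm y := by
  have h1 : vec2Norm (x + y) ^ 2 ≤ (vec2Norm x + vec2Norm y) ^ 2 := by
    rw [v2_sq]
    have heq : ∑ i, ((x + y) i) ^ 2 = (∑ i, x i ^ 2) + 2 * (x ⬝ᵥ y) + ∑ i, y i ^ 2 := by
      simp only [Pi.add_apply, dotProduct, Finset.mul_sum, ← Finset.sum_add_distrib]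
      exact Finset.sum_congr rfl (fun i _ => by ring)
    rw [heq, ← v2_sq x, ← v2_sq y]
    have := dot_le x y
    nlinarith [v2_nonneg x, v2_nonneg y]
  have := abs_le_abs (a := vec2Norm (x+y)) (b := vec2Norm x + vec2Norm y)
  nlinarith [v2_nonneg (x+y), v2_nonneg x, v2_nonneg y]

lemma dot_self_pos {x : n → ℝ} (hx : x ≠ 0) : 0 < x ⬝ᵥ x := by
  obtain ⟨i, hi⟩ := Function.ne_iff.mp hx
  have : (0:ℝ) < ∑ j, x j * x j := by
    apply Finset.sum_pos' (fun j _ => mul_self_nonneg _)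
    exact ⟨i, Finset.mem_univ i, by simpa [mul_self_pos] using hi⟩
  simpa [dotProduct] using this

end VecLemmas


section OpLemmas
variable {m n p : Type*} [Fintype m] [Fintype n] [Fintype p]

/-- Operator bound predicate. -/
def OpB (M : Matrix m n ℝ) (c : ℝ) : Prop :=
  ∀ x : n → ℝ, vec2Norm (M *ᵥ x) ≤ c * vec2Norm x

lemma opB_nonneg_of {M : Matrix m n ℝ} {c : ℝ} (hc : 0 ≤ c) {x : n → ℝ}
    (h : vec2Norm (M *ᵥ x) ≤ c * vec2Norm x) : True := trivial

lemma mulVec_dot (A : Matrix m n ℝ) (x : n → ℝ) (y : m → ℝ) :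
    (A *ᵥ x) ⬝ᵥ y = x ⬝ᵥ (Aᵀ *ᵥ y) := by
  rw [Matrix.dotProduct_mulVec, Matrix.vecMul_transpose, dotProduct_comm]

lemma opB_add {A B : Matrix m n ℝ} {a b : ℝ} (hA : OpB A a) (hB : OpB B b) :
    OpB (A + B) (a + b) := by
  intro x
  rw [Matrix.add_mulVec]
  calc vec2Norm (A *ᵥ x + B *ᵥ x) ≤ vec2Norm (A *ᵥ x) + vec2Norm (B *ᵥ x) := v2_triangle _ _
    _ ≤ a * vec2Norm x + b * vec2Norm x := add_le_add (hA x) (hB x)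
    _ = (a + b) * vec2Norm x := by ring

lemma opB_sub {A B : Matrix m n ℝ} {a b : ℝ} (hA : OpB A a) (hB : OpB B b) :
    OpB (A - B) (a + b) := by
  have : OpB (-B) b := by intro x; rw [Matrix.neg_mulVec, v2_neg]; exact hB x
  simpa [sub_eq_add_neg] using opB_add hA this

lemma opB_mul {A : Matrix m p ℝ} {B : Matrix p n ℝ} {a b : ℝ} (ha : 0 ≤ a)
    (hA : OpB A a) (hB : OpB B b) : OpB (A * B) (a * b) := by
  intro x
  rw [← Matrix.mulVec_mulVec]
  calc vec2Norm (A *ᵥ (B *ᵥ x)) ≤ a * vec2Norm (B *ᵥ x) := hA _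
    _ ≤ a * (b * vec2Norm x) := by exact mul_le_mul_of_nonneg_left (hB x) ha
    _ = a * b * vec2Norm x := by ring

lemma opB_mono {A : Matrix m n ℝ} {a b : ℝ} (hA : OpB A a) (hab : a ≤ b) : OpB A b := by
  intro x
  exact (hA x).trans (mul_le_mul_of_nonneg_right hab (v2_nonneg x))

/-- Frobenius-type bound from entry bounds. -/
lemma opB_of_entries {A : Matrix m n ℝ} {c : ℝ} (hc : 0 ≤ c) (h : ∀ i j, |A i j| ≤ c) :
    OpB A (Real.sqrt (Fintype.card m * Fintype.card n) * c) := by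
  intro x
  have key : vec2Norm (A *ᵥ x) ^ 2 ≤ (Fintype.card m * Fintype.card n) * c ^ 2 * vec2Norm x ^ 2 := by
    rw [v2_sq, v2_sq]
    have hrow : ∀ i : m, (A *ᵥ x) i ^ 2 ≤ (∑ j, A i j ^ 2) * ∑ j, x j ^ 2 := by
      intro i
      have := Finset.sum_mul_sq_le_sq_mul_sq Finset.univ (A i) x
      simpa [Matrix.mulVec, dotProduct] using this
    calc ∑ i, (A *ᵥ x) i ^ 2 ≤ ∑ i : m, (∑ j, A i j ^ 2) * ∑ j, x j ^ 2 :=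
          Finset.sum_le_sum fun i _ => hrow i
      _ ≤ ∑ i : m, ((Fintype.card n) * c ^ 2) * ∑ j, x j ^ 2 := by
          apply Finset.sum_le_sum
          intro i _
          apply mul_le_mul_of_nonneg_right _ (Finset.sum_nonneg fun j _ => sq_nonneg _)
          calc ∑ j, A i j ^ 2 ≤ ∑ j : n, c ^ 2 := by
                apply Finset.sum_le_sum
                intro j _
                rw [← sq_abs]
                exact pow_le_pow_left₀ (abs_nonneg _) (h i j) 2
            _ = (Fintype.card n) * c ^ 2 := by simp [Finset.sum_const, nsmul_eq_mul]
      _ = (Fintype.card m * Fintype.card n) * c ^ 2 * ∑ j, x j ^ 2 := by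
          simp [Finset.sum_const, nsmul_eq_mul]; ring
    
  have h1 : vec2Norm (A *ᵥ x) = Real.sqrt (vec2Norm (A *ᵥ x) ^ 2) := by
    rw [Real.sqrt_sq (v2_nonneg _)]
  rw [h1]
  calc Real.sqrt (vec2Norm (A *ᵥ x) ^ 2)
      ≤ Real.sqrt ((Fintype.card m * Fintype.card n) * c ^ 2 * vec2Norm x ^ 2) :=
        Real.sqrt_le_sqrt key
    _ = Real.sqrt (Fintype.card m * Fintype.card n) * c * vec2Norm x := by
        rw [show ((Fintype.card m * Fintype.card n : ℝ)) * c ^ 2 * vec2Norm x ^ 2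
            = (Real.sqrt (Fintype.card m * Fintype.card n) * c * vec2Norm x) ^ 2 by
          rw [mul_pow, mul_pow, Real.sq_sqrt (by positivity)]]
        rw [Real.sqrt_sq (mul_nonneg (mul_nonneg (Real.sqrt_nonneg _) hc) (v2_nonneg x))]

/-- Isometry from orthonormal columns. -/
lemma v2_mulVec_of_orthocols [DecidableEq n] {A : Matrix m n ℝ} (h : Aᵀ * A = 1) (x : n → ℝ) :
    vec2Norm (A *ᵥ x) = vec2Norm x := by
  have : vec2Norm (A *ᵥ x) ^ 2 = vec2Norm x ^ 2 := by
    rw [← dot_self_eq, ← dot_self_eq, mulVec_dot, Matrix.mulVec_mulVec, h, Matrix.one_mulVec]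
  have h1 := v2_nonneg (A *ᵥ x)
  have h2 := v2_nonneg x
  nlinarith

lemma opB_of_orthocols [DecidableEq n] {A : Matrix m n ℝ} (h : Aᵀ * A = 1) : OpB A 1 := by
  intro x; rw [v2_mulVec_of_orthocols h, one_mul]

lemma opB_transpose_of_orthocols [DecidableEq n] {A : Matrix m n ℝ} (h : Aᵀ * A = 1) : OpB Aᵀ 1 := by
  intro y
  rcases eq_or_lt_of_le (v2_nonneg (Aᵀ *ᵥ y)) with h0 | h0
  · rw [← h0]; simpa using v2_nonneg y
  have key : vec2Norm (Aᵀ *ᵥ y) ^ 2 ≤ vec2Norm y * vec2Norm (Aᵀ *ᵥ y) := by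
    rw [← dot_self_eq]
    have e1 : (Aᵀ *ᵥ y) ⬝ᵥ (Aᵀ *ᵥ y) = (A *ᵥ (Aᵀ *ᵥ y)) ⬝ᵥ y := (mulVec_dot A (Aᵀ *ᵥ y) y).symm
    rw [e1]
    calc (A *ᵥ (Aᵀ *ᵥ y)) ⬝ᵥ y ≤ vec2Norm (A *ᵥ (Aᵀ *ᵥ y)) * vec2Norm y := dot_le _ _
      _ = vec2Norm (Aᵀ *ᵥ y) * vec2Norm y := by rw [v2_mulVec_of_orthocols h]
      _ = vec2Norm y * vec2Norm (Aᵀ *ᵥ y) := by ring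
  rw [one_mul]
  nlinarith

/-- If the quadratic form of M dominates the identity, mulVec is expanding. -/
lemma v2_le_mulVec_of_quad {M : Matrix n n ℝ} (h : ∀ x, vec2Norm x ^ 2 ≤ x ⬝ᵥ (M *ᵥ x)) :
    ∀ x : n → ℝ, vec2Norm x ≤ vec2Norm (M *ᵥ x) := by
  intro x
  rcases eq_or_lt_of_le (v2_nonneg x) with h0 | h0
  · rw [← h0]; exact v2_nonneg _
  have := (h x).trans (dot_le x (M *ᵥ x))
  nlinarith

end OpLemmas

section Sqrt
variable {n : Type*} [Fintype n] [inst : DecidableEq n] {S : Matrix n n ℝ}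

/-- Square root of a positive semidefinite matrix. -/
noncomputable def psdSqrt (h : S.PosSemidef) : Matrix n n ℝ :=
  (h.1.eigenvectorUnitary : Matrix n n ℝ) * diagonal ((↑) ∘ (√·) ∘ h.1.eigenvalues) *
      (star h.1.eigenvectorUnitary : Matrix n n ℝ)

lemma psdSqrt_mul_self (h : S.PosSemidef) : psdSqrt h * psdSqrt h = S := by
  have hU := Unitary.coe_star_mul_self h.1.eigenvectorUnitary
  have hS := h.1.spectral_theorem
  simp only [psdSqrt]
  calc _ = (h.1.eigenvectorUnitary : Matrix n n ℝ) * (diagonal ((↑) ∘ (√·) ∘ h.1.eigenvalues) *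
        ((star h.1.eigenvectorUnitary : Matrix n n ℝ) * (h.1.eigenvectorUnitary : Matrix n n ℝ)) *
        diagonal ((↑) ∘ (√·) ∘ h.1.eigenvalues)) * (star h.1.eigenvectorUnitary : Matrix n n ℝ) := by
          simp only [Matrix.mul_assoc]
    _ = S := by
      rw [hU, Matrix.mul_one, diagonal_mul_diagonal]
      conv_rhs => rw [hS]
      simp only [Unitary.conjStarAlgAut_apply]
      congr 3
      funext i
      simp [Real.mul_self_sqrt (h.eigenvalues_nonneg i)]

lemma psdSqrt_posSemidef (h : S.PosSemidef) : (psdSqrt h).PosSemidef := by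
  unfold psdSqrt
  simp only [Unitary.coe_star, Matrix.star_eq_conjTranspose]
  exact (PosSemidef.diagonal (fun i => by simp [Real.sqrt_nonneg])).mul_mul_conjTranspose_same _

lemma matInvSqrt_eq (hpd : S.PosDef) : matInvSqrt S = ((psdSqrt hpd.posSemidef))⁻¹ := by
  have hi : (fun a b => Classical.propDecidable (a = b) : DecidableEq n) = inst := by
    funext a b
    exact Subsingleton.elim _ _
  simp only [matInvSqrt]
  rw [dif_pos hpd.posSemidef, hi]
  rfl

lemma sqrt_det_isUnit (hpd : S.PosDef) : IsUnit (psdSqrt hpd.posSemidef).det := by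
  rw [isUnit_iff_ne_zero]
  intro h0
  have h := psdSqrt_mul_self hpd.posSemidef
  have : (psdSqrt hpd.posSemidef).det * (psdSqrt hpd.posSemidef).det = S.det := by
    rw [← Matrix.det_mul, h]
  rw [h0, mul_zero] at this
  exact absurd this.symm (ne_of_gt hpd.det_pos)

lemma sqrt_transpose (hpd : S.PosDef) : ((psdSqrt hpd.posSemidef))ᵀ = (psdSqrt hpd.posSemidef) := by
  have h := (psdSqrt_posSemidef hpd.posSemidef).isHermitian
  rwa [Matrix.IsHermitian, Matrix.conjTranspose_eq_transpose_of_trivial] at h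

lemma invSqrt_transpose (hpd : S.PosDef) : (matInvSqrt S)ᵀ = matInvSqrt S := by
  rw [matInvSqrt_eq hpd, Matrix.transpose_nonsing_inv, sqrt_transpose hpd]

lemma invSqrt_posSemidef (hpd : S.PosDef) : (matInvSqrt S).PosSemidef := by
  rw [matInvSqrt_eq hpd]
  exact (psdSqrt_posSemidef hpd.posSemidef).inv

lemma sqrt_mul_invSqrt (hpd : S.PosDef) : (psdSqrt hpd.posSemidef) * matInvSqrt S = 1 := by
  rw [matInvSqrt_eq hpd]; exact Matrix.mul_nonsing_inv _ (sqrt_det_isUnit hpd)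

lemma invSqrt_mul_sqrt (hpd : S.PosDef) : matInvSqrt S * (psdSqrt hpd.posSemidef) = 1 := by
  rw [matInvSqrt_eq hpd]; exact Matrix.nonsing_inv_mul _ (sqrt_det_isUnit hpd)

lemma invSqrt_mul_S_mul_invSqrt (hpd : S.PosDef) :
    matInvSqrt S * S * matInvSqrt S = 1 := by
  have hBR := sqrt_mul_invSqrt hpd
  have hRB := invSqrt_mul_sqrt hpd
  have key : matInvSqrt S * ((psdSqrt hpd.posSemidef) * (psdSqrt hpd.posSemidef)) * matInvSqrt S = 1 := by
    rw [← Matrix.mul_assoc, Matrix.mul_assoc _ _ (matInvSqrt S), hBR, Matrix.mul_one, hRB]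
  rwa [psdSqrt_mul_self hpd.posSemidef] at key

lemma S_mul_invSqrt_sq (hpd : S.PosDef) : S * (matInvSqrt S * matInvSqrt S) = 1 := by
  have hBR := sqrt_mul_invSqrt hpd
  have key : (psdSqrt hpd.posSemidef) * (psdSqrt hpd.posSemidef) * (matInvSqrt S * matInvSqrt S) = 1 := by
    rw [Matrix.mul_assoc, ← Matrix.mul_assoc (psdSqrt hpd.posSemidef) (matInvSqrt S), hBR,
      Matrix.one_mul, hBR]
  rwa [psdSqrt_mul_self hpd.posSemidef] at key

end Sqrt

lemma numHelp1 {rr sm w : ℝ} (hrr : 1 ≤ rr) (hsm : 1 ≤ sm) (hw : 0 ≤ w)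
    (hsmall : rr * w < 1/2) :
    2 * (Real.sqrt rr * w + rr * w ^ 2) ≤ 4 * (rr * Real.sqrt rr) * sm * w := by
  have h0 : (0:ℝ) ≤ rr := by linarith
  have hs1 : (1:ℝ) ≤ Real.sqrt rr := Real.one_le_sqrt.mpr hrr
  have ha : 0 ≤ Real.sqrt rr * w := by positivity
  have e1 : rr * w ^ 2 ≤ (1/2) * (Real.sqrt rr * w) := by
    have h2 : rr * w * w ≤ (1/2) * w := mul_le_mul_of_nonneg_right hsmall.le hw
    nlinarith
  have e2 : 3 * (Real.sqrt rr * w) ≤ 4 * (rr * Real.sqrt rr) * sm * w := by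
    have h3 : (1:ℝ) ≤ rr * sm := by nlinarith
    nlinarith [mul_le_mul_of_nonneg_right h3 ha]
  nlinarith

lemma numHelp2 {s e c : ℝ} (hs : 0 ≤ s) (he : 0 ≤ e) (hes : e ≤ s/2) (hc : 0 ≤ c)
    (hc4 : c ≤ 1/4) :
    (s + e) + c * (s + e) ≤ 2 * s := by nlinarith

lemma numHelp3 {rr w : ℝ} (hrr : 1 ≤ rr) (hw : 0 ≤ w) (hsmall : rr * w < 1/2) :
    Real.sqrt rr * (rr * w ^ 2) ≤ 1/4 := by
  have h0 : (0:ℝ) ≤ rr := by linarith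
  have hs1 : (1:ℝ) ≤ Real.sqrt rr := Real.one_le_sqrt.mpr hrr
  have h1 : Real.sqrt rr ≤ rr := by nlinarith [Real.sq_sqrt h0, Real.sqrt_nonneg rr]
  have h2 : rr * (rr * w ^ 2) = (rr * w) ^ 2 := by ring
  have h3 : 0 ≤ rr * w := mul_nonneg h0 hw
  have h4 : (rr * w) ^ 2 ≤ 1/4 := by nlinarith
  have h5 : Real.sqrt rr * (rr * w ^ 2) ≤ rr * (rr * w ^ 2) :=
    mul_le_mul_of_nonneg_right h1 (by positivity)
  linarith [h2.le, h2.ge]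


set_option maxHeartbeats 4000000 in
/-- Bounds on the candidate basis V̄: subspace distance to V and entrywise size
(used in the proof of Lemma 5.3 of Fan–Wang–Zhong). -/
theorem Vbar_distance_and_max_norm_bound
    (d r : ℕ) (hr : 0 < r) (hrd : r ≤ d)
    (lam : Fin d → ℝ) (v : Fin d → Fin d → ℝ)
    (A : Matrix (Fin d) (Fin d) ℝ) (hAsymm : Aᵀ = A)
    (heig : ∀ i, A.mulVec (v i) = lam i • v i)
    (hon : ∀ i j, ∑ k, v i k * v j k = if i = j then (1 : ℝ) else 0)
    (hdec : ∀ i j : Fin d, i ≤ j → |lam j| ≤ |lam i|)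
    (V : Matrix (Fin d) (Fin r) ℝ)
    (hV : V = Matrix.of fun a k => v (Fin.castLE hrd k) a)
    (Vp : Matrix (Fin d) (Fin (d - r)) ℝ)
    (hVp : Vp = Matrix.of fun (a : Fin d) (k : Fin (d - r)) =>
      v ⟨r + (k : ℕ), by have := k.isLt; omega⟩ a)
    (mu : ℝ) (hmu : mu = matCoherence V)
    (omega : ℝ) (homega : 0 ≤ omega)
    (Q : Matrix (Fin (d - r)) (Fin r) ℝ)
    (hQbound : matMaxNorm (Vp * Q) ≤ omega / Real.sqrt d)
    (hsmall : (r : ℝ) * omega < 1 / 2)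
    (Vbar : Matrix (Fin d) (Fin r) ℝ)
    (hVbar : Vbar = (V + Vp * Q) * matInvSqrt (1 + (Vp * Q)ᵀ * (Vp * Q))) :
    matSpecNorm (Vbar * Vbarᵀ - V * Vᵀ) ≤
        4 * (r : ℝ) ^ ((3 : ℝ) / 2) * Real.sqrt mu * omega ∧
      matMaxNorm Vbar ≤ 2 * Real.sqrt ((r : ℝ) * mu / (d : ℝ)) := by
  have hd0 : 0 < d := lt_of_lt_of_le hr hrd
  have hdR : (0:ℝ) < d := by exact_mod_cast hd0
  have hrR : (0:ℝ) < r := by exact_mod_cast hr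
  have hr1 : (1:ℝ) ≤ r := by exact_mod_cast hr
  have hω2 : omega ≤ (r:ℝ) * omega := by nlinarith
  have hωlt : omega < 1/2 := lt_of_le_of_lt hω2 hsmall
  haveI : Nonempty (Fin d) := ⟨⟨0, hd0⟩⟩
  haveI : Nonempty (Fin r) := ⟨⟨0, hr⟩⟩
  set Qb : Matrix (Fin d) (Fin r) ℝ := Vp * Q with hQb
  set T : Matrix (Fin r) (Fin r) ℝ := Qbᵀ * Qb with hT
  set S : Matrix (Fin r) (Fin r) ℝ := 1 + T with hS
  set R : Matrix (Fin r) (Fin r) ℝ := matInvSqrt S with hR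
  set W : Matrix (Fin d) (Fin r) ℝ := V + Qb with hW
  -- orthogonality
  have hVtV : Vᵀ * V = 1 := by
    rw [hV]
    ext k l
    simp only [Matrix.mul_apply, Matrix.transpose_apply, Matrix.of_apply]
    rw [hon (Fin.castLE hrd k) (Fin.castLE hrd l)]
    simp [Matrix.one_apply, Fin.castLE_inj]
  have hVtVp : Vᵀ * Vp = 0 := by
    rw [hV, hVp]
    ext k l
    simp only [Matrix.mul_apply, Matrix.transpose_apply, Matrix.of_apply]
    rw [hon (Fin.castLE hrd k) ⟨r + (l : ℕ), by have := l.isLt; omega⟩]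
    have hne : Fin.castLE hrd k ≠ ⟨r + (l : ℕ), by have := l.isLt; omega⟩ := by
      intro hcon
      have : (k : ℕ) = r + (l : ℕ) := congrArg Fin.val hcon
      have := k.isLt
      omega
    simp [hne]
  have hVtQb : Vᵀ * Qb = 0 := by rw [hQb, ← Matrix.mul_assoc, hVtVp, Matrix.zero_mul]
  have hQbtV : Qbᵀ * V = 0 := by
    have h := congrArg Matrix.transpose hVtQb
    rwa [Matrix.transpose_mul, Matrix.transpose_transpose, Matrix.transpose_zero] at h
  -- entry bounds
  have hQbent : ∀ i j, |Qb i j| ≤ omega / Real.sqrt d := by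
    intro i j
    have h1 : |Qb i j| ≤ ⨆ j', |Qb i j'| :=
      le_ciSup (f := fun j' => |Qb i j'|) (Set.Finite.bddAbove (Set.finite_range _)) j
    have h2 : (⨆ j', |Qb i j'|) ≤ matMaxNorm Qb :=
      le_ciSup (f := fun i' => ⨆ j', |Qb i' j'|) (Set.Finite.bddAbove (Set.finite_range _)) i
    exact (h1.trans h2).trans hQbound
  have hωd : 0 ≤ omega / Real.sqrt d := by positivity
  have hsd : Real.sqrt d > 0 := Real.sqrt_pos.mpr hdR
  have hTent : ∀ i j, |T i j| ≤ omega ^ 2 := by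
    intro i j
    have he : T i j = ∑ a, Qb a i * Qb a j := by
      rw [hT]; simp [Matrix.mul_apply, Matrix.transpose_apply]
    rw [he]
    calc |∑ a, Qb a i * Qb a j| ≤ ∑ a, |Qb a i * Qb a j| :=
          Finset.abs_sum_le_sum_abs _ _
      _ ≤ ∑ _a : Fin d, (omega / Real.sqrt d) * (omega / Real.sqrt d) := by
          apply Finset.sum_le_sum
          intro a _
          rw [abs_mul]
          exact mul_le_mul (hQbent a i) (hQbent a j) (abs_nonneg _) hωd
      _ = (d : ℝ) * ((omega / Real.sqrt d) * (omega / Real.sqrt d)) := by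
          simp [Finset.sum_const, nsmul_eq_mul]
      _ = omega ^ 2 := by
          rw [div_mul_div_comm, Real.mul_self_sqrt hdR.le]
          field_simp
  -- operator bounds from entries
  have hQbop : OpB Qb (Real.sqrt r * omega) := by
    have h := opB_of_entries hωd hQbent
    apply opB_mono h
    apply le_of_eq
    simp only [Fintype.card_fin]
    rw [Real.sqrt_mul hdR.le]
    field_simp [ne_of_gt hsd]
  have hQbtop : OpB Qbᵀ (Real.sqrt r * omega) := by
    have hent : ∀ i j, |Qbᵀ i j| ≤ omega / Real.sqrt d := fun i j => hQbent j i
    have h := opB_of_entries hωd hent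
    apply opB_mono h
    apply le_of_eq
    simp only [Fintype.card_fin]
    rw [mul_comm ((r:ℕ):ℝ) ((d:ℕ):ℝ), Real.sqrt_mul hdR.le]
    field_simp [ne_of_gt hsd]
  have hTop : OpB T ((r:ℝ) * omega ^ 2) := by
    have h := opB_of_entries (sq_nonneg omega) hTent
    apply opB_mono h
    simp only [Fintype.card_fin]
    rw [show ((r:ℕ):ℝ) * ((r:ℕ):ℝ) = ((r:ℕ):ℝ) * ((r:ℕ):ℝ) from rfl,
      Real.sqrt_mul_self hrR.le]
  -- quadratic form facts
  have hquadT : ∀ x : Fin r → ℝ, x ⬝ᵥ (T *ᵥ x) = (Qb *ᵥ x) ⬝ᵥ (Qb *ᵥ x) := by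
    intro x
    rw [hT, ← Matrix.mulVec_mulVec, ← mulVec_dot]
  have hSpd : S.PosDef := by
    refine Matrix.PosDef.of_dotProduct_mulVec_pos ?_ ?_
    · rw [Matrix.IsHermitian, Matrix.conjTranspose_eq_transpose_of_trivial, hS, hT,
        Matrix.transpose_add, Matrix.transpose_one, Matrix.transpose_mul,
        Matrix.transpose_transpose]
    · intro x hx
      have hsx : star x = x := by simp
      rw [hsx, hS, Matrix.add_mulVec, Matrix.one_mulVec, dotProduct_add]
      have h1 : 0 < x ⬝ᵥ x := dot_self_pos hx
      have h2 : 0 ≤ x ⬝ᵥ (T *ᵥ x) := by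
        rw [hquadT, dot_self_eq]; exact sq_nonneg _
      linarith
  have hRt : Rᵀ = R := invSqrt_transpose hSpd
  have hRpsd : R.PosSemidef := invSqrt_posSemidef hSpd
  have hRSR : R * S * R = 1 := invSqrt_mul_S_mul_invSqrt hSpd
  have hSRR : S * (R * R) = 1 := S_mul_invSqrt_sq hSpd
  have hquadS : ∀ x : Fin r → ℝ, vec2Norm x ^ 2 ≤ x ⬝ᵥ (S *ᵥ x) := by
    intro x
    rw [hS, Matrix.add_mulVec, Matrix.one_mulVec, dotProduct_add, ← dot_self_eq]
    have h2 : 0 ≤ x ⬝ᵥ (T *ᵥ x) := by rw [hquadT, dot_self_eq]; exact sq_nonneg _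
    linarith
  have hSexp : ∀ x : Fin r → ℝ, vec2Norm x ≤ vec2Norm (S *ᵥ x) :=
    v2_le_mulVec_of_quad hquadS
  have hquadIR : ∀ x : Fin r → ℝ, vec2Norm x ^ 2 ≤ x ⬝ᵥ ((1 + R) *ᵥ x) := by
    intro x
    rw [Matrix.add_mulVec, Matrix.one_mulVec, dotProduct_add, ← dot_self_eq]
    have h2 : 0 ≤ x ⬝ᵥ (R *ᵥ x) := by
      have := hRpsd.dotProduct_mulVec_nonneg x
      simpa using this
    linarith
  have hIRexp : ∀ x : Fin r → ℝ, vec2Norm x ≤ vec2Norm ((1 + R) *ᵥ x) :=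
    v2_le_mulVec_of_quad hquadIR
  have hRop : OpB R 1 := by
    intro y
    have key : vec2Norm (R *ᵥ y) ^ 2 ≤ vec2Norm y ^ 2 := by
      calc vec2Norm (R *ᵥ y) ^ 2 ≤ (R *ᵥ y) ⬝ᵥ (S *ᵥ (R *ᵥ y)) := hquadS (R *ᵥ y)
        _ = y ⬝ᵥ ((Rᵀ * (S * R)) *ᵥ y) := by
            rw [mulVec_dot, Matrix.mulVec_mulVec, Matrix.mulVec_mulVec, Matrix.mul_assoc]
        _ = y ⬝ᵥ y := by rw [hRt, ← Matrix.mul_assoc, hRSR, Matrix.one_mulVec]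
        _ = vec2Norm y ^ 2 := dot_self_eq y
    rw [one_mul]
    nlinarith [v2_nonneg (R *ᵥ y), v2_nonneg y]
  have hIRop : OpB (1 - R) ((r:ℝ) * omega ^ 2) := by
    intro y
    have hfact : S * ((1 + R) * (1 - R)) = T := by
      have h1 : (1 + R) * (1 - R) = 1 - R * R := by noncomm_ring
      rw [h1, Matrix.mul_sub, Matrix.mul_one, hSRR, hS]
      abel
    calc vec2Norm ((1 - R) *ᵥ y) ≤ vec2Norm ((1 + R) *ᵥ ((1 - R) *ᵥ y)) := hIRexp _
      _ ≤ vec2Norm (S *ᵥ ((1 + R) *ᵥ ((1 - R) *ᵥ y))) := hSexp _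
      _ = vec2Norm (T *ᵥ y) := by
          rw [Matrix.mulVec_mulVec, Matrix.mulVec_mulVec, Matrix.mul_assoc, hfact]
      _ ≤ (r:ℝ) * omega ^ 2 * vec2Norm y := hTop y
  -- Vbar facts
  have hWtW : Wᵀ * W = S := by
    rw [hW, Matrix.transpose_add, Matrix.add_mul, Matrix.mul_add, Matrix.mul_add,
      hVtV, hVtQb, hQbtV, hS, hT]
    abel
  have hVbtVb : Vbarᵀ * Vbar = 1 := by
    rw [hVbar, Matrix.transpose_mul, hRt]
    calc R * Wᵀ * (W * R) = R * (Wᵀ * W) * R := by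
          rw [Matrix.mul_assoc, Matrix.mul_assoc, Matrix.mul_assoc]
      _ = 1 := by rw [hWtW, hRSR]
  have hVbop : OpB Vbar 1 := opB_of_orthocols hVbtVb
  have hVbtop : OpB Vbarᵀ 1 := opB_transpose_of_orthocols hVbtVb
  have hVop : OpB V 1 := opB_of_orthocols hVtV
  have hVtop : OpB Vᵀ 1 := opB_transpose_of_orthocols hVtV
  have hdiff : Vbar - V = Qb * R - V * (1 - R) := by
    rw [hVbar, hW, Matrix.add_mul, Matrix.mul_sub, Matrix.mul_one]
    abel
  have hIRt : (1 - R : Matrix (Fin r) (Fin r) ℝ)ᵀ = 1 - R := by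
    rw [Matrix.transpose_sub, Matrix.transpose_one, hRt]
  have hdifft : (Vbar - V)ᵀ = R * Qbᵀ - (1 - R) * Vᵀ := by
    rw [hdiff]
    simp only [Matrix.transpose_sub, Matrix.transpose_mul, Matrix.transpose_one, hRt]
  have hdiffop : OpB (Vbar - V) (Real.sqrt r * omega * 1 + 1 * ((r:ℝ) * omega ^ 2)) := by
    rw [hdiff]
    exact opB_sub (opB_mul (by positivity) hQbop hRop) (opB_mul zero_le_one hVop hIRop)
  have hdifftop : OpB (Vbar - V)ᵀ (1 * (Real.sqrt r * omega) + (r:ℝ) * omega ^ 2 * 1) := by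
    rw [hdifft]
    exact opB_sub (opB_mul zero_le_one hRop hQbtop) (opB_mul (by positivity) hIRop hVtop)
  have hDdecomp : Vbar * Vbarᵀ - V * Vᵀ = Vbar * (Vbar - V)ᵀ + (Vbar - V) * Vᵀ := by
    rw [Matrix.transpose_sub, Matrix.mul_sub, Matrix.sub_mul]
    abel
  have hc2 : (0:ℝ) ≤ Real.sqrt r * omega + (r:ℝ) * omega ^ 2 := by positivity
  have hDop : OpB (Vbar * Vbarᵀ - V * Vᵀ) (2 * (Real.sqrt r * omega + (r:ℝ) * omega ^ 2)) := by
    rw [hDdecomp]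
    have h1 := opB_mul zero_le_one hVbop hdifftop
    have h2 := opB_mul (by positivity : (0:ℝ) ≤ Real.sqrt r * omega * 1 + 1 * ((r:ℝ) * omega ^ 2))
      hdiffop hVtop
    have h3 := opB_add h1 h2
    apply opB_mono h3
    apply le_of_eq
    ring
  -- numeric bound for goal 1
  have hsqr1 : (1:ℝ) ≤ Real.sqrt r := Real.one_le_sqrt.mpr hr1
  -- coherence ≥ 1
  have hcol1 : ∀ j : Fin r, ∑ i, V i j ^ 2 = 1 := by
    intro j
    rw [hV]
    have h := hon (Fin.castLE hrd j) (Fin.castLE hrd j)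
    simp only [if_pos rfl] at h
    simp only [Matrix.of_apply]
    calc ∑ i, v (Fin.castLE hrd j) i ^ 2
        = ∑ i, v (Fin.castLE hrd j) i * v (Fin.castLE hrd j) i := by
          apply Finset.sum_congr rfl; intro i _; ring
      _ = 1 := h
  have hrowle : ∀ i, ∑ j, V i j ^ 2 ≤ ⨆ i', ∑ j, V i' j ^ 2 := by
    intro i
    exact le_ciSup (f := fun i' => ∑ j, V i' j ^ 2) (Set.Finite.bddAbove (Set.finite_range _)) i
  have hsumsum : ∑ i, ∑ j, V i j ^ 2 = (r:ℝ) := by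
    rw [Finset.sum_comm]
    simp [hcol1]
  have hcsup0 : (0:ℝ) ≤ ⨆ i', ∑ j, V i' j ^ 2 :=
    le_trans (Finset.sum_nonneg fun j _ => sq_nonneg _) (hrowle (Classical.arbitrary _))
  have hcsup_ge : (r:ℝ) / d ≤ ⨆ i', ∑ j, V i' j ^ 2 := by
    rw [div_le_iff₀ hdR]
    calc (r:ℝ) = ∑ i, ∑ j, V i j ^ 2 := hsumsum.symm
      _ ≤ ∑ _i : Fin d, ⨆ i', ∑ j, V i' j ^ 2 := Finset.sum_le_sum fun i _ => hrowle i
      _ = (⨆ i', ∑ j, V i' j ^ 2) * d := by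
          simp [Finset.sum_const, nsmul_eq_mul]
          ring
  have hmu1 : 1 ≤ mu := by
    rw [hmu, matCoherence]
    calc (1:ℝ) = (d / r) * ((r:ℝ)/d) := by field_simp
      _ ≤ (d / r) * ⨆ i', ∑ j, V i' j ^ 2 := by
          apply mul_le_mul_of_nonneg_left hcsup_ge (by positivity)
  have hmu0 : (0:ℝ) ≤ mu := le_trans zero_le_one hmu1
  have hsqmu1 : (1:ℝ) ≤ Real.sqrt mu := Real.one_le_sqrt.mpr hmu1
  have hr32 : (r:ℝ) ^ ((3:ℝ)/2) = (r:ℝ) * Real.sqrt r := by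
    rw [show (3:ℝ)/2 = 1 + 1/2 by norm_num, Real.rpow_add hrR, Real.rpow_one,
      ← Real.sqrt_eq_rpow]
  have hnum1 : 2 * (Real.sqrt r * omega + (r:ℝ) * omega ^ 2) ≤
      4 * (r:ℝ) ^ ((3:ℝ)/2) * Real.sqrt mu * omega := by
    rw [hr32]
    exact numHelp1 hr1 hsqmu1 homega hsmall
  have goal1 : matSpecNorm (Vbar * Vbarᵀ - V * Vᵀ) ≤
      4 * (r:ℝ) ^ ((3:ℝ)/2) * Real.sqrt mu * omega := by
    have hrhs0 : (0:ℝ) ≤ 4 * (r:ℝ) ^ ((3:ℝ)/2) * Real.sqrt mu * omega := by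
      rw [hr32]; positivity
    apply Real.sSup_le _ hrhs0
    rintro c ⟨x, hx, rfl⟩
    calc vec2Norm ((Vbar * Vbarᵀ - V * Vᵀ) *ᵥ x)
        ≤ 2 * (Real.sqrt r * omega + (r:ℝ) * omega ^ 2) * vec2Norm x := hDop x
      _ ≤ 2 * (Real.sqrt r * omega + (r:ℝ) * omega ^ 2) * 1 := by
          apply mul_le_mul_of_nonneg_left hx (by positivity)
      _ ≤ 4 * (r:ℝ) ^ ((3:ℝ)/2) * Real.sqrt mu * omega := by rw [mul_one]; exact hnum1
  refine ⟨goal1, ?_⟩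
  -- part 2: max norm bound
  have hVent : ∀ i j, |V i j| ≤ Real.sqrt ((r:ℝ) * mu / d) := by
    intro i j
    have h1 : V i j ^ 2 ≤ ∑ j', V i j' ^ 2 :=
      Finset.single_le_sum (f := fun j' => V i j' ^ 2) (fun j' _ => sq_nonneg _)
        (Finset.mem_univ j)
    have h5 : V i j ^ 2 ≤ ⨆ i', ∑ j', V i' j' ^ 2 := h1.trans (hrowle i)
    have h6 : (⨆ i', ∑ j', V i' j' ^ 2) = (r:ℝ) * mu / d := by
      rw [hmu, matCoherence]
      field_simp
    have h4 : V i j ^ 2 ≤ (r:ℝ) * mu / d := h6 ▸ h5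
    calc |V i j| = Real.sqrt (V i j ^ 2) := (Real.sqrt_sq_eq_abs _).symm
      _ ≤ Real.sqrt ((r:ℝ) * mu / d) := Real.sqrt_le_sqrt h4
  set s : ℝ := Real.sqrt ((r:ℝ) * mu / d) with hs0
  have hsnn : 0 ≤ s := Real.sqrt_nonneg _
  set e : ℝ := omega / Real.sqrt d with he0
  set m : ℝ := s + e with hm0
  have hmnn : 0 ≤ m := add_nonneg hsnn hωd
  have hWent : ∀ i j, |W i j| ≤ m := by
    intro i j
    have : W i j = V i j + Qb i j := by rw [hW]; rfl
    rw [this]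
    exact (abs_add_le _ _).trans (add_le_add (hVent i j) (hQbent i j))
  have hrow2 : ∀ i, vec2Norm (fun k => W i k) ≤ Real.sqrt r * m := by
    intro i
    have hb : ∑ k, W i k ^ 2 ≤ (r:ℝ) * m ^ 2 := by
      calc ∑ k, W i k ^ 2 ≤ ∑ _k : Fin r, m ^ 2 := by
            apply Finset.sum_le_sum
            intro k _
            rw [← sq_abs]
            exact pow_le_pow_left₀ (abs_nonneg _) (hWent i k) 2
        _ = (r:ℝ) * m ^ 2 := by simp [Finset.sum_const, nsmul_eq_mul]
    calc vec2Norm (fun k => W i k) = Real.sqrt (∑ k, W i k ^ 2) := rfl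
      _ ≤ Real.sqrt ((r:ℝ) * m ^ 2) := Real.sqrt_le_sqrt hb
      _ = Real.sqrt r * m := by rw [Real.sqrt_mul hrR.le, Real.sqrt_sq hmnn]
  have hcolIR : ∀ j, vec2Norm (fun k => (R - 1) k j) ≤ (r:ℝ) * omega ^ 2 := by
    intro j
    have heq : (fun k => (R - 1) k j) = (R - 1) *ᵥ Pi.single j (1:ℝ) := by
      funext k
      simp [Matrix.mulVec_single]
    have hneg : (R - 1) *ᵥ (Pi.single j (1:ℝ)) = -((1 - R) *ᵥ (Pi.single j (1:ℝ))) := by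
      rw [← Matrix.neg_mulVec, neg_sub]
    have hsingle : vec2Norm (Pi.single j (1:ℝ)) = 1 := by
      have h1 : ∑ i : Fin r, ((Pi.single j (1:ℝ)) i) ^ 2 = (1:ℝ) := by
        rw [Finset.sum_eq_single j]
        · simp
        · intro b _ hb
          simp [Pi.single_apply, hb]
        · intro hj
          exact absurd (Finset.mem_univ j) hj
      rw [vec2Norm, h1, Real.sqrt_one]
    rw [heq, hneg, v2_neg]
    calc vec2Norm ((1 - R) *ᵥ Pi.single j (1:ℝ))
        ≤ (r:ℝ) * omega ^ 2 * vec2Norm (Pi.single j (1:ℝ)) := hIRop _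
      _ = (r:ℝ) * omega ^ 2 := by rw [hsingle, mul_one]
  have hVbent : ∀ i j, |Vbar i j| ≤ m + (Real.sqrt r * m) * ((r:ℝ) * omega ^ 2) := by
    intro i j
    have hWR : Vbar = W + W * (R - 1) := by
      rw [hVbar, Matrix.mul_sub, Matrix.mul_one]
      abel
    have hentry : Vbar i j = W i j + ((fun k => W i k) ⬝ᵥ (fun k => (R - 1) k j)) := by
      rw [hWR]
      simp [Matrix.add_apply, Matrix.mul_apply, dotProduct]
    rw [hentry]
    calc |W i j + ((fun k => W i k) ⬝ᵥ (fun k => (R - 1) k j))|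
        ≤ |W i j| + |(fun k => W i k) ⬝ᵥ (fun k => (R - 1) k j)| := abs_add_le _ _
      _ ≤ m + vec2Norm (fun k => W i k) * vec2Norm (fun k => (R - 1) k j) :=
          add_le_add (hWent i j) (abs_dot_le _ _)
      _ ≤ m + (Real.sqrt r * m) * ((r:ℝ) * omega ^ 2) := by
          apply add_le_add_right
          exact mul_le_mul (hrow2 i) (hcolIR j) (v2_nonneg _) (by positivity)
  have hes : e ≤ s / 2 := by
    have hrmu1 : (1:ℝ) ≤ (r:ℝ) * mu := by nlinarith
    have hsq : Real.sqrt ((r:ℝ) * mu) ≥ 1 := Real.one_le_sqrt.mpr hrmu1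
    have hsdiv : s = Real.sqrt ((r:ℝ) * mu) / Real.sqrt d := by
      rw [hs0, Real.sqrt_div (by positivity)]
    have h2 : omega * 2 ≤ Real.sqrt ((r:ℝ) * mu) := by linarith
    rw [he0, hsdiv, div_div]
    rw [div_le_div_iff₀ hsd (by positivity)]
    calc omega * (Real.sqrt d * 2) = (omega * 2) * Real.sqrt d := by ring
      _ ≤ Real.sqrt ((r:ℝ) * mu) * Real.sqrt d := mul_le_mul_of_nonneg_right h2 hsd.le
  have hcnn : 0 ≤ Real.sqrt r * ((r:ℝ) * omega ^ 2) := by positivity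
  have hc4 : Real.sqrt r * ((r:ℝ) * omega ^ 2) ≤ 1/4 := numHelp3 hr1 homega hsmall
  have hfinal : m + (Real.sqrt r * m) * ((r:ℝ) * omega ^ 2) ≤ 2 * s := by
    have heq2 : m + (Real.sqrt r * m) * ((r:ℝ) * omega ^ 2)
        = (s + e) + (Real.sqrt r * ((r:ℝ) * omega ^ 2)) * (s + e) := by rw [hm0]; ring
    rw [heq2]
    exact numHelp2 hsnn hωd hes hcnn hc4
  calc matMaxNorm Vbar = ⨆ i, ⨆ j, |Vbar i j| := rfl
    _ ≤ 2 * s := by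
      apply ciSup_le
      intro i
      apply ciSup_le
      intro j
      exact (hVbent i j).trans hfinal
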